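/- Let D ⊆ ℂ be an open disc centered at 0 and let f be meromorphic on D such that z ↦ f(z) − 1/z extends holomorphically to D with value 0 at z = 0, and suppose f satisfies the addition theorem f(x+y) = (f(x)f′(y) − f(y)f′(x)) / (f(x)² − f(y)²) for all x, y ∈ D ∖ {0} with x + y ∈ D ∖ {0} at which f is analytic and f(x)² ≠ f(y)². Then there exist constants a, b ∈ ℂ such that f″(z) = 2 f(z)³ + 6a f(z) and f′(z)² = f(z)⁴ + 6a f(z)² + b for all z ∈ D ∖ {0} at which f is analytic; consequently φ = 1/f is an odd holomorphic solution near 0 of (φ′)² = 1 + 6a φ² + b φ⁴ with φ(0) = 0. -/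

import Mathlib

/-!
STATEMENT 10: A meromorphic function `f` on a disc around `0` with
`f(z) = 1/z + O(z)` satisfying the addition theorem
`f(x+y) = (f(x)f′(y) − f(y)f′(x))/(f(x)² − f(y)²)`
obeys `f″ = 2f³ + 6af`, `(f′)² = f⁴ + 6af² + b`; consequently `φ = 1/f` is an
odd holomorphic solution near `0` of `(φ′)² = 1 + 6aφ² + bφ⁴` with `φ(0) = 0`.
-/

open Metric


open Metric Filter Set
open scoped Topology

private lemma analyticAt_deriv' {f : ℂ → ℂ} {x : ℂ} (hf : AnalyticAt ℂ f x) :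
    AnalyticAt ℂ (deriv f) x := by
  obtain ⟨s, hs, hfs⟩ := hf.exists_mem_nhds_analyticOnNhd
  exact hfs.deriv x (mem_of_mem_nhds hs)

private lemma eq_at_of_punctured {F G : ℂ → ℂ} {x : ℂ} (hF : ContinuousAt F x)
    (hG : ContinuousAt G x) (h : F =ᶠ[𝓝[≠] x] G) : F x = G x := by
  have h1 : Tendsto F (𝓝[≠] x) (𝓝 (F x)) :=
    (hF.continuousWithinAt (s := {x}ᶜ)).tendsto
  have h2 : Tendsto F (𝓝[≠] x) (𝓝 (G x)) :=
    ((hG.continuousWithinAt (s := {x}ᶜ)).tendsto).congr' h.symm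
  exact tendsto_nhds_unique h1 h2

private lemma isPreconnected_punctured_ball {r : ℝ} (hr : 0 < r) :
    IsPreconnected (ball (0 : ℂ) r \ {0}) := by
  set seg : Set ℂ := (fun t : ℝ => (t : ℂ)) '' Ioo 0 r with hseg
  have hsegpre : IsPreconnected seg :=
    isPreconnected_Ioo.image _ (Complex.continuous_ofReal.continuousOn)
  have hmemseg : ∀ t : ℝ, 0 < t → t < r → (t : ℂ) ∈ seg := fun t h1 h2 =>
    ⟨t, ⟨h1, h2⟩, rfl⟩
  have hrank : (1 : Cardinal) < Module.rank ℝ ℂ := by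
    rw [Complex.rank_real_complex]; norm_num
  have key : ball (0 : ℂ) r \ {0} = ⋃₀ ((fun s => sphere (0:ℂ) s ∪ seg) '' Ioo 0 r) := by
    ext z
    simp only [mem_diff, mem_ball, mem_singleton_iff, mem_sUnion, mem_image]
    constructor
    · rintro ⟨hz, hz0⟩
      refine ⟨sphere (0:ℂ) ‖z‖ ∪ seg, ⟨‖z‖, ⟨norm_pos_iff.2 hz0, by simpa using hz⟩, rfl⟩, ?_⟩
      exact Or.inl (by simp)
    · rintro ⟨_, ⟨s, ⟨hs0, hsr⟩, rfl⟩, hz⟩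
      rcases hz with hz | hz
      · simp only [mem_sphere_iff_norm, sub_zero] at hz
        constructor
        · rw [dist_zero_right, hz]; exact hsr
        · intro h; rw [h] at hz; simp only [norm_zero] at hz; linarith
      · obtain ⟨t, ⟨ht0, htr⟩, rfl⟩ := hz
        constructor
        · rw [dist_zero_right, Complex.norm_real, Real.norm_eq_abs, abs_of_pos ht0]; exact htr
        · simp only [Complex.ofReal_eq_zero]; intro h; linarith
  rw [key]
  refine isPreconnected_sUnion ((r/2 : ℝ) : ℂ) _ ?_ ?_
  · rintro _ ⟨s, hs, rfl⟩
    exact Or.inr (hmemseg _ (by linarith) (by linarith))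
  · rintro _ ⟨s, ⟨hs0, hsr⟩, rfl⟩
    apply IsPreconnected.union ((s : ℝ) : ℂ)
    · simp [abs_of_pos hs0]
    · exact hmemseg s hs0 hsr
    · exact isPreconnected_sphere hrank 0 s
    · exact hsegpre

private lemma key_ode1 (r : ℝ) (hr : 0 < r) (f h : ℂ → ℂ)
    (hh : ∀ z ∈ ball (0 : ℂ) r, AnalyticAt ℂ h z) (h0 : h 0 = 0)
    (hfh : ∀ z ∈ ball (0 : ℂ) r, z ≠ 0 → f z = 1 / z + h z)
    (hadd : ∀ x y : ℂ, x ∈ ball (0 : ℂ) r → y ∈ ball (0 : ℂ) r →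
      x + y ∈ ball (0 : ℂ) r → x ≠ 0 → y ≠ 0 → x + y ≠ 0 →
      AnalyticAt ℂ f x → AnalyticAt ℂ f y → AnalyticAt ℂ f (x + y) →
      f x ^ 2 ≠ f y ^ 2 →
      f (x + y) = (f x * deriv f y - f y * deriv f x) / (f x ^ 2 - f y ^ 2)) :
    ∀ x ∈ ball (0:ℂ) r, x ≠ 0 →
      deriv (deriv f) x = 2 * (f x)^3 + 6 * (-(deriv h 0)) * (f x) := by
  have hball : (0:ℂ) ∈ ball (0:ℂ) r := mem_ball_self hr
  have hopen : IsOpen (ball (0:ℂ) r) := isOpen_ball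
  set c1 : ℂ := deriv h 0 with hc1_def
  set A : ℂ → ℂ := fun z => 1 + z * h z with hA_def
  set B : ℂ → ℂ := fun z => -1 + z^2 * deriv h z with hB_def
  have hAan : ∀ z ∈ ball (0:ℂ) r, AnalyticAt ℂ A z := fun z hz =>
    analyticAt_const.add (analyticAt_id.mul (hh z hz))
  have hBan : ∀ z ∈ ball (0:ℂ) r, AnalyticAt ℂ B z := fun z hz =>
    analyticAt_const.add ((analyticAt_id.pow 2).mul (analyticAt_deriv' (hh z hz)))
  have hfan : ∀ z ∈ ball (0:ℂ) r, z ≠ 0 → AnalyticAt ℂ f z := by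
    intro z hz hz0
    have han : AnalyticAt ℂ (fun w => 1 / w + h w) z :=
      (analyticAt_const.div analyticAt_id hz0).add (hh z hz)
    apply han.congr
    filter_upwards [hopen.eventually_mem hz, eventually_ne_nhds hz0] with w hw hw0
    exact (hfh w hw hw0).symm
  have hfA : ∀ z ∈ ball (0:ℂ) r, z ≠ 0 → f z = A z / z := by
    intro z hz hz0
    rw [hfh z hz hz0, hA_def]
    field_simp
  have hdf : ∀ z ∈ ball (0:ℂ) r, z ≠ 0 → deriv f z = -(z^2)⁻¹ + deriv h z := by
    intro z hz hz0
    have hev : f =ᶠ[𝓝 z] fun w => w⁻¹ + h w := by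
      filter_upwards [hopen.eventually_mem hz, eventually_ne_nhds hz0] with w hw hw0
      rw [hfh w hw hw0, one_div]
    rw [hev.deriv_eq, deriv_fun_add (differentiableAt_inv hz0) (hh z hz).differentiableAt,
      deriv_inv]
  -- values of A and B at 0
  have hA0 : A 0 = 1 := by simp [hA_def]
  have hdAen : ∀ z ∈ ball (0:ℂ) r, deriv A z = h z + z * deriv h z := by
    intro z hz
    have : deriv A z = deriv (fun w => 1 + w * h w) z := rfl
    rw [this, deriv_const_add,
      deriv_fun_mul differentiableAt_fun_id (hh z hz).differentiableAt, deriv_id'']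
    ring
  have hdA0 : deriv A 0 = 0 := by rw [hdAen 0 hball, h0]; ring
  have hddA0 : deriv (deriv A) 0 = 2 * c1 := by
    have hev : deriv A =ᶠ[𝓝 0] fun z => h z + z * deriv h z := by
      filter_upwards [hopen.eventually_mem hball] with w hw using hdAen w hw
    rw [hev.deriv_eq, deriv_fun_add (hh 0 hball).differentiableAt
      (differentiableAt_fun_id.fun_mul (analyticAt_deriv' (hh 0 hball)).differentiableAt),
      deriv_fun_mul differentiableAt_fun_id (analyticAt_deriv' (hh 0 hball)).differentiableAt,
      deriv_id'']
    simp [hc1_def]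
    ring
  have hdBen : ∀ z ∈ ball (0:ℂ) r, deriv B z = 2*z*deriv h z + z^2 * deriv (deriv h) z := by
    intro z hz
    have : deriv B z = deriv (fun w => -1 + w^2 * deriv h w) z := rfl
    rw [this, deriv_const_add,
      deriv_fun_mul (differentiableAt_pow 2) (analyticAt_deriv' (hh z hz)).differentiableAt,
      deriv_pow_field]
    ring
  have hddB0 : deriv (deriv B) 0 = 2 * c1 := by
    have hev : deriv B =ᶠ[𝓝 0] fun z => 2*z*deriv h z + z^2 * deriv (deriv h) z := by
      filter_upwards [hopen.eventually_mem hball] with w hw using hdBen w hw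
    have hdh := (analyticAt_deriv' (hh 0 hball)).differentiableAt
    have hddh := (analyticAt_deriv' (analyticAt_deriv' (hh 0 hball))).differentiableAt
    rw [hev.deriv_eq, deriv_fun_add ((differentiableAt_fun_id.const_mul 2).fun_mul hdh)
      ((differentiableAt_pow 2).fun_mul hddh),
      deriv_fun_mul (differentiableAt_fun_id.const_mul 2) hdh,
      deriv_fun_mul (differentiableAt_pow 2) hddh, deriv_pow_field]
    have : deriv (fun z : ℂ => 2 * z) 0 = 2 := by
      rw [deriv_const_mul 2 differentiableAt_fun_id, deriv_id'']; ring
    rw [this]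
    simp [hc1_def]
  -- main pointwise second-order ODE
  intro x hx hx0
  set c : ℂ := f x with hc_def
  set d : ℂ := deriv f x with hd_def
  set P : ℂ → ℂ := fun y => f (x + y) with hP_def
  set Q : ℂ → ℂ := fun y => y^2 * c^2 - (A y)^2 with hQ_def
  set Φ : ℂ → ℂ := fun y => P y * Q y - c * B y + d * (y * A y) with hPhi_def
  have hxadd : Tendsto (fun y : ℂ => x + y) (𝓝 0) (𝓝 x) := by
    simpa using (continuous_add_left x).tendsto (0 : ℂ)
  have ev1 : ∀ᶠ y : ℂ in 𝓝 0, y ∈ ball (0:ℂ) r := hopen.eventually_mem hball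
  have ev2 : ∀ᶠ y : ℂ in 𝓝 0, x + y ∈ ball (0:ℂ) r := hxadd.eventually (hopen.eventually_mem hx)
  have ev3 : ∀ᶠ y : ℂ in 𝓝 0, x + y ≠ 0 := hxadd.eventually (eventually_ne_nhds hx0)
  have ev4 : ∀ᶠ y : ℂ in 𝓝 0, (1:ℝ)/2 < ‖A y‖ := by
    have hcont : Tendsto (fun y => ‖A y‖) (𝓝 0) (𝓝 1) := by
      have h1 := (hAan 0 hball).continuousAt
      rw [ContinuousAt, hA0] at h1
      simpa [Function.comp_def] using (continuous_norm.tendsto (1:ℂ)).comp h1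
    exact hcont.eventually_const_lt (by norm_num)
  have ev5 : ∀ᶠ y : ℂ in 𝓝 0, ‖y‖ < (2 * (‖c‖ + 1))⁻¹ := by
    have hpos : (0:ℝ) < (2 * (‖c‖ + 1))⁻¹ := by positivity
    filter_upwards [Metric.ball_mem_nhds (0:ℂ) hpos] with y hy
    simpa [mem_ball_zero_iff] using hy
  have hPhi0 : Φ =ᶠ[𝓝[≠] (0:ℂ)] 0 := by
    filter_upwards [ev1.filter_mono nhdsWithin_le_nhds, ev2.filter_mono nhdsWithin_le_nhds,
      ev3.filter_mono nhdsWithin_le_nhds, ev4.filter_mono nhdsWithin_le_nhds,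
      ev5.filter_mono nhdsWithin_le_nhds, self_mem_nhdsWithin] with y hy1 hy2 hy3 hy4 hy5 hy6
    have hy0 : y ≠ 0 := hy6
    have hy0' : (0:ℝ) < ‖y‖ := norm_pos_iff.2 hy0
    have hfy : f y = A y / y := hfA y hy1 hy0
    have hM : (0:ℝ) < ‖c‖ + 1 := by positivity
    have hnorm : ‖c‖ < ‖f y‖ := by
      rw [hfy, norm_div]
      have h1 : (‖c‖ + 1) * ‖y‖ < (‖c‖ + 1) * (2 * (‖c‖ + 1))⁻¹ :=
        mul_lt_mul_of_pos_left hy5 hM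
      have h2 : (‖c‖ + 1) * (2 * (‖c‖ + 1))⁻¹ = 1/2 := by
        field_simp
      rw [h2] at h1
      have h3 : ‖c‖ + 1 < ‖A y‖ / ‖y‖ := by
        rw [lt_div_iff₀ hy0']
        linarith
      linarith
    have hne : f x ^ 2 ≠ f y ^ 2 := by
      intro heq
      have h1 : ‖f x‖^2 = ‖f y‖^2 := by
        rw [← norm_pow, ← norm_pow, heq]
      have h2 : ‖f x‖ < ‖f y‖ := hnorm
      nlinarith [norm_nonneg (f x), norm_nonneg (f y)]
    have happ := hadd x y hx hy1 hy2 hx0 hy0 hy3 (hfan x hx hx0) (hfan y hy1 hy0)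
      (hfan _ hy2 hy3) hne
    have hD : f x ^ 2 - f y ^ 2 ≠ 0 := sub_ne_zero.2 hne
    have key : f (x+y) * (f x ^ 2 - f y ^ 2) = f x * deriv f y - f y * deriv f x := by
      rw [happ]; field_simp
    have hAy : A y = f y * y := by rw [hfy]; field_simp
    have hBy : B y = y^2 * deriv f y := by
      rw [hdf y hy1 hy0, hB_def]
      field_simp
    show P y * Q y - c * B y + d * (y * A y) = 0
    simp only [hP_def, hQ_def]
    linear_combination y^2 * key - f (x+y) * (A y + f y * y) * hAy - c * hBy + d * y * hAy
  -- analyticity of the pieces at 0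
  have hPan : AnalyticAt ℂ P 0 := by
    have h1 : AnalyticAt ℂ (fun y : ℂ => x + y) 0 := analyticAt_const.add analyticAt_id
    have h2 : AnalyticAt ℂ f ((fun y : ℂ => x + y) 0) := by simpa using hfan x hx hx0
    exact h2.comp h1
  have hAan0 : AnalyticAt ℂ A 0 := hAan 0 hball
  have hBan0 : AnalyticAt ℂ B 0 := hBan 0 hball
  have hQan : AnalyticAt ℂ Q 0 := ((analyticAt_id.pow 2).mul analyticAt_const).sub (hAan0.pow 2)
  have hPhian : AnalyticAt ℂ Φ 0 :=
    ((hPan.mul hQan).sub (analyticAt_const.mul hBan0)).add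
      (analyticAt_const.mul (analyticAt_id.mul hAan0))
  have hPhiAt0 : Φ 0 = 0 := by
    have h1 : Tendsto Φ (𝓝[≠] (0:ℂ)) (𝓝 (Φ 0)) :=
      (hPhian.continuousAt.continuousWithinAt (s := {(0:ℂ)}ᶜ)).tendsto
    have h2 : Tendsto Φ (𝓝[≠] (0:ℂ)) (𝓝 0) :=
      (tendsto_const_nhds (α := ℂ)).congr' hPhi0.symm
    exact tendsto_nhds_unique h1 h2
  have hPhiev : Φ =ᶠ[𝓝 (0:ℂ)] 0 := by
    have h' : ∀ᶠ y in 𝓝 (0:ℂ), y ∈ ({(0:ℂ)}ᶜ : Set ℂ) → Φ y = 0 :=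
      eventually_nhdsWithin_iff.mp hPhi0
    filter_upwards [h'] with y hy
    rcases eq_or_ne y 0 with rfl | hne
    · exact hPhiAt0
    · exact hy hne
  have hzero : deriv (deriv Φ) 0 = 0 := by
    have h1 : deriv Φ =ᶠ[𝓝 (0:ℂ)] deriv (0 : ℂ → ℂ) := hPhiev.deriv
    have h2 : deriv (0 : ℂ → ℂ) = fun _ => (0:ℂ) := by
      funext w; exact deriv_const w 0
    rw [h1.deriv_eq, h2]
    exact deriv_const 0 0
  -- derivative identities for P
  have hdPfun : deriv P = fun y => deriv f (x + y) := by
    funext y; exact deriv_comp_const_add f x y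
  have hP0 : P 0 = c := by simp [hP_def, hc_def]
  have hdP0 : deriv P 0 = d := by rw [hdPfun]; simp [hd_def]
  have hddPx : deriv (deriv P) 0 = deriv (deriv f) x := by
    rw [hdPfun]
    simpa using deriv_comp_const_add (deriv f) x 0
  have hQder : ∀ y : ℂ, AnalyticAt ℂ A y →
      HasDerivAt Q (2*y*c^2 - 2*A y*deriv A y) y := by
    intro y hyA
    have h1 : HasDerivAt (fun w : ℂ => w^2*c^2) (2*y*c^2) y := by
      have := (hasDerivAt_pow 2 y).mul_const (c^2)
      exact this.congr_deriv (by push_cast; ring)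
    have h2 : HasDerivAt (fun w => (A w)^2) (2*A y*deriv A y) y := by
      have := hyA.differentiableAt.hasDerivAt.pow 2
      exact this.congr_deriv (by push_cast; ring)
    exact h1.sub h2
  have evAan : ∀ᶠ y : ℂ in 𝓝 0, AnalyticAt ℂ A y := ev1.mono fun y hy => hAan y hy
  have evBan : ∀ᶠ y : ℂ in 𝓝 0, AnalyticAt ℂ B y := ev1.mono fun y hy => hBan y hy
  have evPan : ∀ᶠ y : ℂ in 𝓝 0, AnalyticAt ℂ P y := hPan.eventually_analyticAt
  set Ψ : ℂ → ℂ := fun y => deriv P y * Q y + P y * (2*y*c^2 - 2*A y*deriv A y)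
      - c * deriv B y + d * (1 * A y + y * deriv A y) with hPsi_def
  have hPsiev : deriv Φ =ᶠ[𝓝 (0:ℂ)] Ψ := by
    filter_upwards [evAan, evBan, evPan] with y hyA hyB hyP
    have hPd := hyP.differentiableAt.hasDerivAt
    have hAd := hyA.differentiableAt.hasDerivAt
    have hBd := hyB.differentiableAt.hasDerivAt
    have hQd := hQder y hyA
    have hder : HasDerivAt Φ (deriv P y * Q y + P y * (2*y*c^2 - 2*A y*deriv A y)
        - c * deriv B y + d * (1 * A y + y * deriv A y)) y :=
      ((hPd.mul hQd).sub (hBd.const_mul c)).add (((hasDerivAt_id y).mul hAd).const_mul d)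
    exact hder.deriv
  have hkey : deriv Ψ 0 = 0 := by rw [← hPsiev.deriv_eq]; exact hzero
  have hA0an : AnalyticAt ℂ A 0 := hAan 0 hball
  have HA : HasDerivAt A (deriv A 0) 0 := hA0an.differentiableAt.hasDerivAt
  have HdA : HasDerivAt (deriv A) (deriv (deriv A) 0) 0 :=
    (analyticAt_deriv' hA0an).differentiableAt.hasDerivAt
  have HdB : HasDerivAt (deriv B) (deriv (deriv B) 0) 0 :=
    (analyticAt_deriv' hBan0).differentiableAt.hasDerivAt
  have HP : HasDerivAt P (deriv P 0) 0 := hPan.differentiableAt.hasDerivAt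
  have HdP : HasDerivAt (deriv P) (deriv (deriv P) 0) 0 :=
    (analyticAt_deriv' hPan).differentiableAt.hasDerivAt
  have HQ : HasDerivAt Q (2*(0:ℂ)*c^2 - 2*A 0*deriv A 0) 0 := hQder 0 hA0an
  have Hin1 : HasDerivAt (fun y : ℂ => 2*y*c^2) (2*c^2) 0 := by
    have := ((hasDerivAt_id (0:ℂ)).const_mul 2).mul_const (c^2)
    exact this.congr_deriv (by push_cast; ring)
  have Hin2 : HasDerivAt (fun y : ℂ => 2*A y*deriv A y)
      (2*deriv A 0*deriv A 0 + 2*A 0*deriv (deriv A) 0) 0 := by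
    have := (HA.const_mul 2).mul HdA
    exact this.congr_deriv (by push_cast; ring)
  have Hin : HasDerivAt (fun y : ℂ => 2*y*c^2 - 2*A y*deriv A y)
      (2*c^2 - (2*deriv A 0*deriv A 0 + 2*A 0*deriv (deriv A) 0)) 0 := Hin1.sub Hin2
  have Hin4 : HasDerivAt (fun y : ℂ => 1 * A y + y * deriv A y)
      (1 * deriv A 0 + (1 * deriv A 0 + 0 * deriv (deriv A) 0)) 0 :=
    (HA.const_mul 1).add ((hasDerivAt_id 0).mul HdA)
  have HPsi : HasDerivAt Ψ
      ((deriv (deriv P) 0 * Q 0 + deriv P 0 * (2*(0:ℂ)*c^2 - 2*A 0*deriv A 0)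
        + (deriv P 0 * (2*(0:ℂ)*c^2 - 2*A 0*deriv A 0)
          + P 0 * (2*c^2 - (2*deriv A 0*deriv A 0 + 2*A 0*deriv (deriv A) 0)))
        - c * deriv (deriv B) 0)
        + d * (1 * deriv A 0 + (1 * deriv A 0 + 0 * deriv (deriv A) 0))) 0 :=
    (((HdP.mul HQ).add (HP.mul Hin)).sub (HdB.const_mul c)).add (Hin4.const_mul d)
  have hQ0 : Q 0 = -1 := by simp [hQ_def, hA0]
  have final := HPsi.deriv
  rw [hkey, hP0, hdP0, hddPx, hA0, hdA0, hddA0, hddB0, hQ0] at final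
  linear_combination final



theorem addition_theorem_gives_ode
    (r : ℝ) (hr : 0 < r) (f : ℂ → ℂ)
    (hmer : MeromorphicOn f (ball (0 : ℂ) r))
    -- `z ↦ f(z) − 1/z` extends holomorphically to the disc, with value `0` at `0`:
    (hpole : ∃ h : ℂ → ℂ, (∀ z ∈ ball (0 : ℂ) r, AnalyticAt ℂ h z) ∧ h 0 = 0 ∧
      ∀ z ∈ ball (0 : ℂ) r, z ≠ 0 → f z = 1 / z + h z)
    -- the addition theorem:
    (hadd : ∀ x y : ℂ, x ∈ ball (0 : ℂ) r → y ∈ ball (0 : ℂ) r →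
      x + y ∈ ball (0 : ℂ) r → x ≠ 0 → y ≠ 0 → x + y ≠ 0 →
      AnalyticAt ℂ f x → AnalyticAt ℂ f y → AnalyticAt ℂ f (x + y) →
      f x ^ 2 ≠ f y ^ 2 →
      f (x + y) = (f x * deriv f y - f y * deriv f x) / (f x ^ 2 - f y ^ 2)) :
    ∃ a b : ℂ,
      (∀ z ∈ ball (0 : ℂ) r, z ≠ 0 → AnalyticAt ℂ f z →
        deriv (deriv f) z = 2 * f z ^ 3 + 6 * a * f z ∧
        (deriv f z) ^ 2 = f z ^ 4 + 6 * a * f z ^ 2 + b) ∧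
      ∃ ρ : ℝ, 0 < ρ ∧ ρ ≤ r ∧ ∃ φ : ℂ → ℂ,
        (∀ z ∈ ball (0 : ℂ) ρ, AnalyticAt ℂ φ z) ∧
        φ 0 = 0 ∧
        (∀ z ∈ ball (0 : ℂ) ρ, φ (-z) = -φ z) ∧
        (∀ z ∈ ball (0 : ℂ) ρ, z ≠ 0 → φ z = (f z)⁻¹) ∧
        (∀ z ∈ ball (0 : ℂ) ρ, (deriv φ z) ^ 2 = 1 + 6 * a * φ z ^ 2 + b * φ z ^ 4) := by
  obtain ⟨h, hh, h0, hfh⟩ := hpole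
  have hball : (0:ℂ) ∈ ball (0:ℂ) r := mem_ball_self hr
  have hopen : IsOpen (ball (0:ℂ) r) := isOpen_ball
  set a : ℂ := -(deriv h 0) with ha_def
  set A : ℂ → ℂ := fun z => 1 + z * h z with hA_def
  have hAan : ∀ z ∈ ball (0:ℂ) r, AnalyticAt ℂ A z := fun z hz =>
    analyticAt_const.add (analyticAt_id.mul (hh z hz))
  have hA0 : A 0 = 1 := by simp [hA_def]
  have hfan : ∀ z ∈ ball (0:ℂ) r, z ≠ 0 → AnalyticAt ℂ f z := by
    intro z hz hz0
    have han : AnalyticAt ℂ (fun w => 1 / w + h w) z :=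
      (analyticAt_const.div analyticAt_id hz0).add (hh z hz)
    apply han.congr
    filter_upwards [hopen.eventually_mem hz, eventually_ne_nhds hz0] with w hw hw0
    exact (hfh w hw hw0).symm
  have hfA : ∀ z ∈ ball (0:ℂ) r, z ≠ 0 → f z = A z / z := by
    intro z hz hz0
    rw [hfh z hz hz0, hA_def]
    field_simp
  have ode1 : ∀ x ∈ ball (0:ℂ) r, x ≠ 0 →
      deriv (deriv f) x = 2 * f x ^ 3 + 6 * a * f x :=
    key_ode1 r hr f h hh h0 hfh hadd
  -- second ODE : constancy of the first integral
  set U : Set ℂ := ball (0:ℂ) r \ {0} with hU_def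
  have hUopen : IsOpen U := hopen.sdiff isClosed_singleton
  have hUpre : IsPreconnected U := isPreconnected_punctured_ball hr
  set g : ℂ → ℂ := fun z => (deriv f z)^2 - (f z)^4 - 6*a*(f z)^2 with hg_def
  have hgan : ∀ z ∈ U, AnalyticAt ℂ g z := by
    intro z hz
    have hz0 : z ≠ 0 := hz.2
    have hf' := hfan z hz.1 hz0
    exact (((analyticAt_deriv' hf').pow 2).sub (hf'.pow 4)).sub
      (analyticAt_const.mul (hf'.pow 2))
  have hgd : ∀ z ∈ U, deriv g z = 0 := by
    intro z hz
    have hz0 : z ≠ 0 := hz.2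
    have hf' := hfan z hz.1 hz0
    have Hf : HasDerivAt f (deriv f z) z := hf'.differentiableAt.hasDerivAt
    have Hdf : HasDerivAt (deriv f) (deriv (deriv f) z) z :=
      (analyticAt_deriv' hf').differentiableAt.hasDerivAt
    have Hg : HasDerivAt g (2 * deriv f z * deriv (deriv f) z
        - 4 * f z ^ 3 * deriv f z - 6*a*(2 * f z * deriv f z)) z := by
      have := ((Hdf.pow 2).sub (Hf.pow 4)).sub ((Hf.pow 2).const_mul (6*a))
      exact this.congr_deriv (by push_cast; ring)
    rw [Hg.deriv, ode1 z hz.1 hz0]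
    ring
  have hz₀U : ((r/2 : ℝ) : ℂ) ∈ U := by
    constructor
    · rw [mem_ball, dist_zero_right, Complex.norm_real, Real.norm_eq_abs,
        abs_of_pos (by linarith)]
      linarith
    · simp only [mem_singleton_iff, Complex.ofReal_eq_zero]
      intro hc
      linarith
  set b : ℂ := g ((r/2 : ℝ) : ℂ) with hb_def
  have hconst : ∀ z ∈ U, g z = b := by
    obtain ⟨ε, hε, hball'⟩ := Metric.isOpen_iff.1 hUopen _ hz₀U
    have hev : g =ᶠ[𝓝 (((r/2 : ℝ) : ℂ))] fun _ => b := by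
      filter_upwards [ball_mem_nhds _ hε] with w hw
      refine (convex_ball _ _).is_const_of_fderivWithin_eq_zero
        (fun u hu => ((hgan u (hball' hu)).differentiableAt).differentiableWithinAt)
        ?_ hw (mem_ball_self hε)
      intro u hu
      rw [fderivWithin_of_isOpen isOpen_ball hu]
      have h1 : HasDerivAt g 0 u := by
        have := (hgan u (hball' hu)).differentiableAt.hasDerivAt
        rwa [hgd u (hball' hu)] at this
      have h2 : HasFDerivAt g (0 : ℂ →L[ℂ] ℂ) u := by
        have := h1.hasFDerivAt
        rwa [ContinuousLinearMap.toSpanSingleton_zero] at this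
      exact h2.fderiv
    exact fun z hz =>
      AnalyticOnNhd.eqOn_of_preconnected_of_eventuallyEq (fun u hu => hgan u hu)
        (fun u hu => analyticAt_const) hUpre hz₀U hev hz
  have ode2 : ∀ z ∈ ball (0:ℂ) r, z ≠ 0 → (deriv f z)^2 = (f z)^4 + 6*a*(f z)^2 + b := by
    intro z hz hz0
    have hc := hconst z ⟨hz, by simpa using hz0⟩
    simp only [hg_def] at hc
    linear_combination hc
  -- construction of φ
  have hAne : ∀ᶠ z : ℂ in 𝓝 0, A z ≠ 0 :=
    (hAan 0 hball).continuousAt.eventually_ne (by rw [hA0]; norm_num)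
  obtain ⟨ρ₀, hρ₀pos, hρ₀⟩ := Metric.eventually_nhds_iff_ball.mp hAne
  set ρ : ℝ := min ρ₀ r with hρ_def
  have hρpos : 0 < ρ := lt_min hρ₀pos hr
  have hρler : ρ ≤ r := min_le_right _ _
  have hsubr : ball (0:ℂ) ρ ⊆ ball (0:ℂ) r := ball_subset_ball hρler
  have hAne' : ∀ z ∈ ball (0:ℂ) ρ, A z ≠ 0 := fun z hz =>
    hρ₀ z (ball_subset_ball (min_le_left _ _) hz)
  set φ : ℂ → ℂ := fun z => z / A z with hφ_def
  have hφan : ∀ z ∈ ball (0:ℂ) ρ, AnalyticAt ℂ φ z := fun z hz =>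
    analyticAt_id.div (hAan z (hsubr hz)) (hAne' z hz)
  have hφ0 : φ 0 = 0 := by simp [hφ_def]
  have hφf : ∀ z ∈ ball (0:ℂ) ρ, z ≠ 0 → φ z = (f z)⁻¹ := by
    intro z hz hz0
    rw [hfA z (hsubr hz) hz0, inv_div]
  have hfne : ∀ z ∈ ball (0:ℂ) ρ, z ≠ 0 → f z ≠ 0 := by
    intro z hz hz0
    rw [hfA z (hsubr hz) hz0]
    exact div_ne_zero (hAne' z hz) hz0
  have hρopen : IsOpen (ball (0:ℂ) ρ) := isOpen_ball
  have hρmem : (0:ℂ) ∈ ball (0:ℂ) ρ := mem_ball_self hρpos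
  have hdφ : ∀ z ∈ ball (0:ℂ) ρ, z ≠ 0 → deriv φ z = -deriv f z / f z ^ 2 := by
    intro z hz hz0
    have hev : φ =ᶠ[𝓝 z] fun w => (f w)⁻¹ := by
      filter_upwards [hρopen.eventually_mem hz, eventually_ne_nhds hz0] with w hw hw0
      exact hφf w hw hw0
    rw [hev.deriv_eq, deriv_fun_inv'' (hfan z (hsubr hz) hz0).differentiableAt (hfne z hz hz0)]
  have hφodeNe : ∀ z ∈ ball (0:ℂ) ρ, z ≠ 0 →
      (deriv φ z)^2 = 1 + 6*a*(φ z)^2 + b*(φ z)^4 := by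
    intro z hz hz0
    have h2 := ode2 z (hsubr hz) hz0
    have hfz := hfne z hz hz0
    rw [hdφ z hz hz0, hφf z hz hz0, div_pow, neg_sq, h2]
    field_simp
  have hφode : ∀ z ∈ ball (0:ℂ) ρ, (deriv φ z)^2 = 1 + 6*a*(φ z)^2 + b*(φ z)^4 := by
    intro z hz
    rcases eq_or_ne z 0 with rfl | hz0
    · have hφan0 := hφan 0 hρmem
      have hF : ContinuousAt (fun w => (deriv φ w)^2) 0 :=
        ((analyticAt_deriv' hφan0).pow 2).continuousAt
      have hG : ContinuousAt (fun w => 1 + 6*a*(φ w)^2 + b*(φ w)^4) 0 :=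
        ((analyticAt_const.add (analyticAt_const.mul (hφan0.pow 2))).add
          (analyticAt_const.mul (hφan0.pow 4))).continuousAt
      refine eq_at_of_punctured hF hG ?_
      filter_upwards [(hρopen.eventually_mem hρmem).filter_mono nhdsWithin_le_nhds,
        self_mem_nhdsWithin] with w hw hw0
      exact hφodeNe w hw hw0
    · exact hφodeNe z hz hz0

  have hφ''Ne : ∀ z ∈ ball (0:ℂ) ρ, z ≠ 0 →
      deriv (deriv φ) z = 6*a*φ z + 2*b*(φ z)^3 := by
    intro z hz hz0
    have hev : deriv φ =ᶠ[𝓝 z] fun w => -deriv f w / f w ^ 2 := by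
      filter_upwards [hρopen.eventually_mem hz, eventually_ne_nhds hz0] with w hw hw0
      exact hdφ w hw hw0
    have hf' := hfan z (hsubr hz) hz0
    have Hf : HasDerivAt f (deriv f z) z := hf'.differentiableAt.hasDerivAt
    have Hdf : HasDerivAt (deriv f) (deriv (deriv f) z) z :=
      (analyticAt_deriv' hf').differentiableAt.hasDerivAt
    have hfz := hfne z hz hz0
    have hfz2 : f z ^ 2 ≠ 0 := pow_ne_zero _ hfz
    have hden : HasDerivAt (fun w => f w ^ 2) (2 * f z * deriv f z) z := by
      have := Hf.pow 2
      exact this.congr_deriv (by push_cast; ring)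
    have Hq : HasDerivAt (fun w => -deriv f w / f w ^ 2)
        ((-deriv (deriv f) z * f z ^ 2 - -deriv f z * (2 * f z * deriv f z)) / (f z ^ 2)^2) z :=
      Hdf.neg.div hden hfz2
    have h2 := ode2 z (hsubr hz) hz0
    have key : -(2 * f z ^ 3 + 6 * a * f z) * f z ^ 2 - -deriv f z * (2 * f z * deriv f z)
        = (6*a*(f z)^2 + 2*b) * f z := by
      linear_combination 2 * f z * h2
    rw [hev.deriv_eq, Hq.deriv, ode1 z (hsubr hz) hz0, hφf z hz hz0, key]
    field_simp
  have hφ'' : ∀ z ∈ ball (0:ℂ) ρ, deriv (deriv φ) z = 6*a*φ z + 2*b*(φ z)^3 := by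
    intro z hz
    rcases eq_or_ne z 0 with rfl | hz0
    · have hφan0 := hφan 0 hρmem
      have hF : ContinuousAt (fun w => deriv (deriv φ) w) 0 :=
        (analyticAt_deriv' (analyticAt_deriv' hφan0)).continuousAt
      have hG : ContinuousAt (fun w => 6*a*φ w + 2*b*(φ w)^3) 0 :=
        ((analyticAt_const.mul hφan0).add
          (analyticAt_const.mul (hφan0.pow 3))).continuousAt
      refine eq_at_of_punctured hF hG ?_
      filter_upwards [(hρopen.eventually_mem hρmem).filter_mono nhdsWithin_le_nhds,
        self_mem_nhdsWithin] with w hw hw0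
      exact hφ''Ne w hw hw0
    · exact hφ''Ne z hz hz0
  have hodd : ∀ z ∈ ball (0:ℂ) ρ, φ (-z) = -φ z := by
    set ψ : ℂ → ℂ := fun z => -φ (-z) with hψ_def
    have hmemneg : ∀ z ∈ ball (0:ℂ) ρ, -z ∈ ball (0:ℂ) ρ := by
      intro z hz
      simpa [mem_ball, dist_zero_right] using hz
    have hψan : ∀ z ∈ ball (0:ℂ) ρ, AnalyticAt ℂ ψ z := by
      intro z hz
      have h1 : AnalyticAt ℂ (fun w : ℂ => -w) z := analyticAt_id.neg
      have h2 : AnalyticAt ℂ φ ((fun w : ℂ => -w) z) := hφan (-z) (hmemneg z hz)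
      exact (h2.comp h1).neg
    have hdψ : ∀ z : ℂ, deriv ψ z = deriv φ (-z) := by
      intro z
      have h1 : deriv ψ z = -deriv (fun w => φ (-w)) z := deriv.neg
      rw [h1, deriv_comp_neg φ z]
      ring
    have hdψfun : deriv ψ = fun z => deriv φ (-z) := funext hdψ
    have hψ'' : ∀ z ∈ ball (0:ℂ) ρ, deriv (deriv ψ) z = 6*a*ψ z + 2*b*(ψ z)^3 := by
      intro z hz
      rw [hdψfun, deriv_comp_neg (deriv φ) z, hφ'' (-z) (hmemneg z hz)]
      simp only [hψ_def]
      ring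
    set δ : ℂ → ℂ := fun z => φ z - ψ z with hδ_def
    set W : ℂ → ℂ := fun z => 6*a + 2*b*((φ z)^2 + φ z * ψ z + (ψ z)^2) with hW_def
    have hδan : ∀ z ∈ ball (0:ℂ) ρ, AnalyticAt ℂ δ z := fun z hz =>
      (hφan z hz).sub (hψan z hz)
    have hWan : ∀ z ∈ ball (0:ℂ) ρ, AnalyticAt ℂ W z := fun z hz =>
      analyticAt_const.add (analyticAt_const.mul ((((hφan z hz).pow 2).add
        ((hφan z hz).mul (hψan z hz))).add ((hψan z hz).pow 2)))
    have hdδ : ∀ z ∈ ball (0:ℂ) ρ, deriv δ z = deriv φ z - deriv ψ z := fun z hz =>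
      deriv_sub (hφan z hz).differentiableAt (hψan z hz).differentiableAt
    have hδ'' : ∀ z ∈ ball (0:ℂ) ρ, deriv (deriv δ) z = δ z * W z := by
      intro z hz
      have hev : deriv δ =ᶠ[𝓝 z] fun w => deriv φ w - deriv ψ w := by
        filter_upwards [hρopen.eventually_mem hz] with w hw
        exact hdδ w hw
      rw [hev.deriv_eq, deriv_fun_sub (analyticAt_deriv' (hφan z hz)).differentiableAt
        (analyticAt_deriv' (hψan z hz)).differentiableAt, hφ'' z hz, hψ'' z hz]
      simp only [hδ_def, hW_def]
      ring
    have hδ0 : δ 0 = 0 := by simp [hδ_def, hψ_def, hφ0]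
    have hdδ0 : deriv δ 0 = 0 := by
      rw [hdδ 0 hρmem, hdψ 0]
      simp
    have hδ0an : AnalyticAt ℂ δ 0 := hδan 0 hρmem
    have hordertop : analyticOrderAt δ 0 = ⊤ := by
      by_contra htop
      lift analyticOrderAt δ 0 to ℕ using htop with n hn
      obtain ⟨G, hGan, hG0, hGev⟩ := (hδ0an.analyticOrderAt_eq_natCast).mp hn.symm
      have hGev' : δ =ᶠ[𝓝 (0:ℂ)] fun z => z ^ n * G z := by
        filter_upwards [hGev] with w hw
        simpa using hw
      match n with
      | 0 =>
        have h1 : δ 0 = (0:ℂ) ^ 0 * G 0 := hGev'.self_of_nhds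
        simp [hδ0] at h1
        exact hG0 h1.symm
      | 1 =>
        have h1 : deriv δ 0 = deriv (fun z : ℂ => z ^ 1 * G z) 0 := hGev'.deriv_eq
        have h2 := ((hasDerivAt_pow 1 (0:ℂ)).fun_mul hGan.differentiableAt.hasDerivAt).deriv
        rw [h2] at h1
        simp [hdδ0] at h1
        exact hG0 h1.symm
      | (m+2) =>
        have hev1 : deriv δ =ᶠ[𝓝 (0:ℂ)]
            fun z => z^(m+1) * (((m:ℂ)+2) * G z + z * deriv G z) := by
          refine hGev'.deriv.trans ?_
          filter_upwards [hGan.eventually_analyticAt] with w hw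
          have := ((hasDerivAt_pow (m+2) w).fun_mul hw.differentiableAt.hasDerivAt).deriv
          rw [this]
          push_cast
          ring
        set G1 : ℂ → ℂ := fun z => ((m:ℂ)+2) * G z + z * deriv G z with hG1_def
        have hG1an : AnalyticAt ℂ G1 0 :=
          (analyticAt_const.mul hGan).add (analyticAt_id.mul (analyticAt_deriv' hGan))
        have hev2 : deriv (deriv δ) =ᶠ[𝓝 (0:ℂ)]
            fun z => z^m * (((m:ℂ)+1) * G1 z + z * deriv G1 z) := by
          refine hev1.deriv.trans ?_
          filter_upwards [hG1an.eventually_analyticAt] with w hw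
          have := ((hasDerivAt_pow (m+1) w).fun_mul hw.differentiableAt.hasDerivAt).deriv
          rw [this]
          push_cast
          ring
        set G2 : ℂ → ℂ := fun z => ((m:ℂ)+1) * G1 z + z * deriv G1 z with hG2_def
        have hG2an : AnalyticAt ℂ G2 0 :=
          (analyticAt_const.mul hG1an).add (analyticAt_id.mul (analyticAt_deriv' hG1an))
        have hG20 : G2 0 = ((m:ℂ)+1)*(((m:ℂ)+2)*G 0) := by
          simp [hG2_def, hG1_def]
        have hevode : ∀ᶠ w in 𝓝 (0:ℂ), deriv (deriv δ) w = δ w * W w := by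
          filter_upwards [hρopen.eventually_mem hρmem] with w hw
          exact hδ'' w hw
        have hcomb : G2 =ᶠ[𝓝[≠] (0:ℂ)] fun w => w^2 * (G w * W w) := by
          have e1 := hev2.filter_mono (nhdsWithin_le_nhds (s := {(0:ℂ)}ᶜ))
          have e2 := hevode.filter_mono (nhdsWithin_le_nhds (s := {(0:ℂ)}ᶜ))
          have e3 := hGev'.filter_mono (nhdsWithin_le_nhds (s := {(0:ℂ)}ᶜ))
          filter_upwards [e1, e2, e3, self_mem_nhdsWithin] with w h1 h2 h3 hw0
          have hw0' : (w : ℂ) ≠ 0 := hw0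
          have hpow : (w:ℂ)^m ≠ 0 := pow_ne_zero _ hw0'
          have h5 : w ^ m * G2 w = w ^ m * (w^2 * (G w * W w)) := by
            rw [← h1, h2, h3]
            ring
          exact mul_left_cancel₀ hpow h5
        have hcont2 : ContinuousAt (fun w : ℂ => w^2 * (G w * W w)) 0 :=
          ((analyticAt_id.pow 2).mul (hGan.mul (hWan 0 hρmem))).continuousAt
        have hzero2 := eq_at_of_punctured hG2an.continuousAt hcont2 hcomb
        rw [hG20] at hzero2
        simp only [ne_eq, OfNat.ofNat_ne_zero, not_false_eq_true, zero_pow, zero_mul] at hzero2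
        have hm1 : ((m:ℂ)+1) ≠ 0 := by
          have := (Nat.cast_ne_zero (R := ℂ)).mpr (Nat.succ_ne_zero m)
          push_cast at this
          exact this
        have hm2 : ((m:ℂ)+2) ≠ 0 := by
          have := (Nat.cast_ne_zero (R := ℂ)).mpr (Nat.succ_ne_zero (m+1))
          push_cast at this
          intro hc
          apply this
          linear_combination hc
        exact (mul_ne_zero hm1 (mul_ne_zero hm2 hG0)) hzero2
    have hδev : δ =ᶠ[𝓝 (0:ℂ)] 0 := analyticOrderAt_eq_top.mp hordertop
    have hEq : Set.EqOn δ 0 (ball (0:ℂ) ρ) :=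
      AnalyticOnNhd.eqOn_zero_of_preconnected_of_eventuallyEq_zero
        (fun z hz => hδan z hz) (convex_ball _ _).isPreconnected hρmem hδev
    intro z hz
    have h1 := hEq hz
    simp only [hδ_def, hψ_def, Pi.zero_apply] at h1
    linear_combination h1
  exact ⟨a, b, fun z hz hz0 _ => ⟨ode1 z hz hz0, ode2 z hz hz0⟩,
    ρ, hρpos, hρler, φ, hφan, hφ0, hodd, hφf, hφode⟩
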